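/- Let 1 ≤ k ≤ n, A ∈ ℂ^{n×n}, and (a,b) ∈ ℝ². The following are equivalent: (a) a + ib ∈ Λ_k(A); (b) for every (t,x,y) ∈ ℝ³ with t + ax + by = 0, the Hermitian matrix t·I_n + x·Re A + y·Im A has at most n−k strictly positive eigenvalues (counted with multiplicity); (c) for every (t,x,y) ∈ ℝ³ with t + ax + by = 0, the matrix t·I_n + x·Re A + y·Im A has at most n−k strictly negative eigenvalues; (d) λ_{n−k+1}(x·Re A + y·Im A) ≤ ax + by for all (x,y) ∈ ℝ²; (e) λ_k(x·Re A + y·Im A) ≥ ax + by for all (x,y) ∈ ℝ²; (f) λ_k(Re A + y·Im A) ≥ a + by and λ_{n−k+1}(Re A + y·Im A) ≤ a + by for all y ∈ ℝ. -/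

import Mathlib

open Matrix

noncomputable section

/-- The Hermitian real part `(A + Aᴴ)/2` of a complex matrix. -/
def ReM {n : ℕ} (A : Matrix (Fin n) (Fin n) ℂ) : Matrix (Fin n) (Fin n) ℂ :=
  (2⁻¹ : ℂ) • (A + Aᴴ)

/-- The Hermitian imaginary part `(A - Aᴴ)/(2i)` of a complex matrix. -/
def ImM {n : ℕ} (A : Matrix (Fin n) (Fin n) ℂ) : Matrix (Fin n) (Fin n) ℂ :=
  ((2 * Complex.I)⁻¹ : ℂ) • (A - Aᴴ)

/-- The `k`-th largest eigenvalue (for `1 ≤ k ≤ n`) of a Hermitian `n × n` matrix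
(with junk value `0` for non-Hermitian input): the eigenvalues sorted in increasing
order, evaluated at index `n - k`. -/
def kthEig {n : ℕ} (M : Matrix (Fin n) (Fin n) ℂ) (k : ℕ) : ℝ :=
  if hM : M.IsHermitian then
    if h : n - k < n then (hM.eigenvalues ∘ Tuple.sort hM.eigenvalues) ⟨n - k, h⟩ else 0
  else 0

/-- `λ_k(x,y) = λ_k(x·Re A + y·Im A)`. -/
def lamXY {n : ℕ} (A : Matrix (Fin n) (Fin n) ℂ) (k : ℕ) (x y : ℝ) : ℝ :=
  kthEig ((x : ℂ) • ReM A + (y : ℂ) • ImM A) k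

/-- `λ_k(θ) = λ_k(cos θ · Re A + sin θ · Im A)`. -/
def lamTheta {n : ℕ} (A : Matrix (Fin n) (Fin n) ℂ) (k : ℕ) (θ : ℝ) : ℝ :=
  lamXY A k (Real.cos θ) (Real.sin θ)

/-- The rank-`k` numerical range, via the Li–Sze halfplane description:
`Λ_k(A) = {a + ib : a cos θ + b sin θ ≤ λ_k(θ) for all θ}`. -/
def NumRange {n : ℕ} (A : Matrix (Fin n) (Fin n) ℂ) (k : ℕ) : Set ℂ :=
  {z : ℂ | ∀ θ : ℝ, z.re * Real.cos θ + z.im * Real.sin θ ≤ lamTheta A k θ}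

/-- The matrix pencil `v₀·I + v₁·Re A + v₂·Im A`. -/
def pencil {n : ℕ} (A : Matrix (Fin n) (Fin n) ℂ) (v : Fin 3 → ℝ) :
    Matrix (Fin n) (Fin n) ℂ :=
  (v 0 : ℂ) • (1 : Matrix (Fin n) (Fin n) ℂ) + (v 1 : ℂ) • ReM A + (v 2 : ℂ) • ImM A

open scoped Classical in
/-- The number of strictly positive eigenvalues (with multiplicity) of a Hermitian matrix. -/
def posEigs {n : ℕ} (M : Matrix (Fin n) (Fin n) ℂ) : ℕ :=
  if hM : M.IsHermitian then (Finset.univ.filter fun i => 0 < hM.eigenvalues i).card else 0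

open scoped Classical in
/-- The number of strictly negative eigenvalues (with multiplicity) of a Hermitian matrix. -/
def negEigs {n : ℕ} (M : Matrix (Fin n) (Fin n) ℂ) : ℕ :=
  if hM : M.IsHermitian then (Finset.univ.filter fun i => hM.eigenvalues i < 0).card else 0

/-! ### Auxiliary machinery -/

open Polynomial in
lemma charpoly_unitary_conj {n : ℕ} (U : Matrix.unitaryGroup (Fin n) ℂ)
    (B : Matrix (Fin n) (Fin n) ℂ) :
    ((U : Matrix (Fin n) (Fin n) ℂ) * B * (star U : Matrix (Fin n) (Fin n) ℂ)).charpoly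
      = B.charpoly := by
  set U' : Matrix (Fin n) (Fin n) (Polynomial ℂ) := (U : Matrix (Fin n) (Fin n) ℂ).map C with hU'
  set V' : Matrix (Fin n) (Fin n) (Polynomial ℂ) :=
    (star U : Matrix (Fin n) (Fin n) ℂ).map C with hV'
  have hUV : U' * V' = 1 := by
    rw [hU', hV', ← Matrix.map_mul, Matrix.mem_unitaryGroup_iff.mp U.2]
    simp
  have hVU : V' * U' = 1 := by
    rw [hU', hV', ← Matrix.map_mul, Unitary.coe_star_mul_self U]
    simp
  have hc := (Matrix.scalar_commute (X : Polynomial ℂ) (fun r => Commute.all _ _) U').eq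
  have key : charmatrix ((U : Matrix (Fin n) (Fin n) ℂ) * B * (star U : Matrix (Fin n) (Fin n) ℂ))
      = U' * charmatrix B * V' := by
    unfold charmatrix
    rw [Matrix.mul_sub, Matrix.sub_mul, RingHom.mapMatrix_apply, RingHom.mapMatrix_apply,
      ← Matrix.map_mul, ← Matrix.map_mul]
    congr 1
    rw [← hc, mul_assoc, hUV, mul_one]
  rw [Matrix.charpoly, key, Matrix.det_mul, Matrix.det_mul, mul_comm, ← mul_assoc, ← Matrix.det_mul,
    hVU]
  simp [Matrix.charpoly]

open Polynomial in
lemma charpoly_diagonal_real {n : ℕ} (d : Fin n → ℝ) :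
    (Matrix.diagonal ((↑) ∘ d) : Matrix (Fin n) (Fin n) ℂ).charpoly
      = ∏ i, (X - C ((d i : ℂ))) := by
  have : charmatrix (Matrix.diagonal ((↑) ∘ d) : Matrix (Fin n) (Fin n) ℂ)
      = Matrix.diagonal fun i => (X - C ((d i : ℂ))) := by
    ext i j
    rcases eq_or_ne i j with rfl | h
    · simp [charmatrix_apply_eq]
    · simp [charmatrix_apply_ne _ _ _ h, Matrix.diagonal_apply_ne _ h]
  rw [Matrix.charpoly, this, Matrix.det_diagonal]

open Polynomial in
lemma hermitian_charpoly_eq_prod {n : ℕ} {B : Matrix (Fin n) (Fin n) ℂ} (hB : B.IsHermitian) :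
    B.charpoly = ∏ i, (X - C ((hB.eigenvalues i : ℂ))) := by
  conv_lhs => rw [hB.spectral_theorem]
  rw [Unitary.conjStarAlgAut_apply, charpoly_unitary_conj]
  exact charpoly_diagonal_real _

open Polynomial in
/-- eigenvalue multiset determined by charpoly -/
lemma eig_multiset_eq {n : ℕ} {B : Matrix (Fin n) (Fin n) ℂ} (hB : B.IsHermitian) (d : Fin n → ℝ)
    (h : B.charpoly = ∏ i, (X - C ((d i : ℂ)))) :
    Finset.univ.val.map hB.eigenvalues = Finset.univ.val.map d := by
  have h2 : (Multiset.map (fun a => X - C a)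
        (Finset.univ.val.map fun i => ((hB.eigenvalues i : ℂ)))).prod
      = (Multiset.map (fun a => X - C a) (Finset.univ.val.map fun i => ((d i : ℂ)))).prod := by
    rw [Multiset.map_map, Multiset.map_map]
    rw [← Finset.prod_eq_multiset_prod, ← Finset.prod_eq_multiset_prod]
    rw [show ∀ f : Fin n → ℂ, ∏ x : Fin n, ((fun a => X - C a) ∘ f) x
        = ∏ x : Fin n, (X - C (f x)) from fun f => rfl, ← hermitian_charpoly_eq_prod hB, h]
    rfl
  have h3 := congrArg Polynomial.roots h2
  rw [Polynomial.roots_multiset_prod_X_sub_C, Polynomial.roots_multiset_prod_X_sub_C] at h3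
  have h4 : Multiset.map ((↑) : ℝ → ℂ) (Finset.univ.val.map hB.eigenvalues)
      = Multiset.map ((↑) : ℝ → ℂ) (Finset.univ.val.map d) := by
    rw [Multiset.map_map, Multiset.map_map]; exact h3
  exact Multiset.map_injective Complex.ofReal_injective h4

/-- sorted eigenvalues -/
def sEig {n : ℕ} {B : Matrix (Fin n) (Fin n) ℂ} (hB : B.IsHermitian) : Fin n → ℝ :=
  hB.eigenvalues ∘ Tuple.sort hB.eigenvalues

lemma sEig_mono {n : ℕ} {B : Matrix (Fin n) (Fin n) ℂ} (hB : B.IsHermitian) :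
    Monotone (sEig hB) :=
  Tuple.monotone_sort _

lemma multiset_map_perm {n : ℕ} (f : Fin n → ℝ) (σ : Equiv.Perm (Fin n)) :
    Finset.univ.val.map (f ∘ σ) = Finset.univ.val.map f := by
  rw [← Multiset.map_map]
  congr 1
  simpa using congrArg Finset.val (Finset.map_univ_equiv σ)

lemma sEig_multiset {n : ℕ} {B : Matrix (Fin n) (Fin n) ℂ} (hB : B.IsHermitian) :
    Finset.univ.val.map (sEig hB) = Finset.univ.val.map hB.eigenvalues :=
  multiset_map_perm _ _

lemma mono_unique {n : ℕ} {f g : Fin n → ℝ} (hf : Monotone f) (hg : Monotone g)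
    (h : Finset.univ.val.map f = Finset.univ.val.map g) : f = g := by
  rw [Fin.univ_val_map, Fin.univ_val_map] at h
  have hp : (List.ofFn f).Perm (List.ofFn g) := Quotient.exact h
  exact List.ofFn_injective (List.Perm.eq_of_sortedLE hf.sortedLE_ofFn hg.sortedLE_ofFn hp)

/-- counting: at most `j` eigenvalues below `c` iff `s j ≥ c` -/
lemma count_lt_le_iff {n : ℕ} {s : Fin n → ℝ} (hs : Monotone s) (c : ℝ) (j : Fin n) :
    ((Finset.univ.filter fun i => s i < c).card ≤ (j : ℕ)) ↔ c ≤ s j := by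
  constructor
  · intro h
    by_contra hc
    push_neg at hc
    have hsub : Finset.Iic j ⊆ Finset.univ.filter fun i => s i < c := by
      intro i hi
      simp only [Finset.mem_Iic] at hi
      simp only [Finset.mem_filter, Finset.mem_univ, true_and]
      exact lt_of_le_of_lt (hs hi) hc
    have := Finset.card_le_card hsub
    rw [Fin.card_Iic] at this
    omega
  · intro h
    have hsub : (Finset.univ.filter fun i => s i < c) ⊆ Finset.Iio j := by
      intro i hi
      simp only [Finset.mem_filter, Finset.mem_univ, true_and] at hi
      simp only [Finset.mem_Iio]
      by_contra hij
      push_neg at hij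
      exact absurd (lt_of_le_of_lt (h.trans (hs hij)) hi) (lt_irrefl _)
    have := Finset.card_le_card hsub
    rwa [Fin.card_Iio] at this

/-- counting: at most `n-(j+1)` eigenvalues above `c` iff `s j ≤ c` -/
lemma count_gt_le_iff {n : ℕ} {s : Fin n → ℝ} (hs : Monotone s) (c : ℝ) (j : Fin n) :
    ((Finset.univ.filter fun i => c < s i).card ≤ n - ((j : ℕ) + 1)) ↔ s j ≤ c := by
  constructor
  · intro h
    by_contra hc
    push_neg at hc
    have hsub : Finset.Ici j ⊆ Finset.univ.filter fun i => c < s i := by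
      intro i hi
      simp only [Finset.mem_Ici] at hi
      simp only [Finset.mem_filter, Finset.mem_univ, true_and]
      exact lt_of_lt_of_le hc (hs hi)
    have := Finset.card_le_card hsub
    rw [Fin.card_Ici] at this
    have hj := j.isLt
    omega
  · intro h
    have hsub : (Finset.univ.filter fun i => c < s i) ⊆ Finset.Ioi j := by
      intro i hi
      simp only [Finset.mem_filter, Finset.mem_univ, true_and] at hi
      simp only [Finset.mem_Ioi]
      by_contra hij
      push_neg at hij
      exact absurd (lt_of_lt_of_le hi ((hs hij).trans h)) (lt_irrefl _)
    have := Finset.card_le_card hsub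
    rw [Fin.card_Ioi] at this
    omega

lemma card_filter_eq_of_multiset_eq {n : ℕ} {f g : Fin n → ℝ}
    (h : Finset.univ.val.map f = Finset.univ.val.map g) (p : ℝ → Prop) [DecidablePred p] :
    (Finset.univ.filter fun i => p (f i)).card = (Finset.univ.filter fun i => p (g i)).card := by
  have : Multiset.countP p (Finset.univ.val.map f)
      = Multiset.countP p (Finset.univ.val.map g) := by rw [h]
  rwa [Multiset.countP_map, Multiset.countP_map] at this

/-! ### Spectral subspace estimates -/

lemma toEuclideanLin_eigenvectorBasis {n : ℕ} {B : Matrix (Fin n) (Fin n) ℂ} (hB : B.IsHermitian)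
    (i : Fin n) :
    Matrix.toEuclideanLin B (hB.eigenvectorBasis i)
      = (hB.eigenvalues i : ℂ) • hB.eigenvectorBasis i := by
  have h1 := congrFun (hB.mulVec_eigenvectorBasis i)
  ext j
  have := h1 j
  simp only [Pi.smul_apply, smul_eq_mul] at this ⊢
  rw [Matrix.toEuclideanLin_apply]
  simpa [Complex.real_smul] using this

lemma repr_toEuclideanLin {n : ℕ} {B : Matrix (Fin n) (Fin n) ℂ} (hB : B.IsHermitian)
    (x : EuclideanSpace ℂ (Fin n)) (i : Fin n) :
    hB.eigenvectorBasis.repr (Matrix.toEuclideanLin B x) i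
      = (hB.eigenvalues i : ℂ) * hB.eigenvectorBasis.repr x i := by
  have hsym : (Matrix.toEuclideanLin B).IsSymmetric := isHermitian_iff_isSymmetric.1 hB
  rw [OrthonormalBasis.repr_apply_apply, OrthonormalBasis.repr_apply_apply,
    ← hsym (hB.eigenvectorBasis i) x, toEuclideanLin_eigenvectorBasis hB i,
    inner_smul_left, Complex.conj_ofReal]

lemma re_inner_toEuclideanLin {n : ℕ} {B : Matrix (Fin n) (Fin n) ℂ} (hB : B.IsHermitian)
    (x : EuclideanSpace ℂ (Fin n)) :
    (inner (𝕜 := ℂ) x (Matrix.toEuclideanLin B x)).re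
      = ∑ i, hB.eigenvalues i * Complex.normSq (hB.eigenvectorBasis.repr x i) := by
  rw [← hB.eigenvectorBasis.repr.inner_map_map x (Matrix.toEuclideanLin B x),
    PiLp.inner_apply, Complex.re_sum]
  refine Finset.sum_congr rfl fun i _ => ?_
  rw [repr_toEuclideanLin hB x i]
  simp only [RCLike.inner_apply]
  rw [show (hB.eigenvalues i : ℂ) * hB.eigenvectorBasis.repr x i
        * (starRingEnd ℂ) (hB.eigenvectorBasis.repr x i)
      = (hB.eigenvalues i : ℂ)
        * ((starRingEnd ℂ) (hB.eigenvectorBasis.repr x i) * hB.eigenvectorBasis.repr x i) by ring,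
    ← Complex.normSq_eq_conj_mul_self, ← Complex.ofReal_mul, Complex.ofReal_re]

lemma repr_eq_zero_of_mem_span {n : ℕ} {B : Matrix (Fin n) (Fin n) ℂ} (hB : B.IsHermitian)
    (P : Set (Fin n)) (x : EuclideanSpace ℂ (Fin n))
    (hx : x ∈ Submodule.span ℂ (hB.eigenvectorBasis '' P)) (i : Fin n) (hi : i ∉ P) :
    hB.eigenvectorBasis.repr x i = 0 := by
  rw [OrthonormalBasis.repr_apply_apply]
  induction hx using Submodule.span_induction with
  | mem y hy =>
    obtain ⟨p, hp, rfl⟩ := hy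
    exact hB.eigenvectorBasis.orthonormal.2 (fun h : i = p => hi (h ▸ hp))
  | zero => exact inner_zero_right _
  | add y z _ _ hy hz => rw [inner_add_right, hy, hz, add_zero]
  | smul c y _ hy => rw [inner_smul_right, hy, mul_zero]

lemma norm_sq_eq_sum_normSq {n : ℕ} {B : Matrix (Fin n) (Fin n) ℂ} (hB : B.IsHermitian)
    (x : EuclideanSpace ℂ (Fin n)) :
    ‖x‖ ^ 2 = ∑ i, Complex.normSq (hB.eigenvectorBasis.repr x i) := by
  rw [← hB.eigenvectorBasis.repr.norm_map x, EuclideanSpace.norm_eq,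
    Real.sq_sqrt (by positivity)]
  refine Finset.sum_congr rfl fun i _ => ?_
  exact Complex.sq_norm _

lemma inner_span_ge {n : ℕ} {B : Matrix (Fin n) (Fin n) ℂ} (hB : B.IsHermitian) (c : ℝ)
    (P : Set (Fin n)) (hP : ∀ i ∈ P, c ≤ hB.eigenvalues i)
    (x : EuclideanSpace ℂ (Fin n))
    (hx : x ∈ Submodule.span ℂ (hB.eigenvectorBasis '' P)) :
    c * ‖x‖ ^ 2 ≤ (inner (𝕜 := ℂ) x (Matrix.toEuclideanLin B x)).re := by
  rw [re_inner_toEuclideanLin hB x, norm_sq_eq_sum_normSq hB x, Finset.mul_sum]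
  refine Finset.sum_le_sum fun i _ => ?_
  by_cases hi : i ∈ P
  · exact mul_le_mul_of_nonneg_right (hP i hi) (Complex.normSq_nonneg _)
  · rw [repr_eq_zero_of_mem_span hB P x hx i hi]
    simp

lemma inner_span_le {n : ℕ} {B : Matrix (Fin n) (Fin n) ℂ} (hB : B.IsHermitian) (c : ℝ)
    (P : Set (Fin n)) (hP : ∀ i ∈ P, hB.eigenvalues i ≤ c)
    (x : EuclideanSpace ℂ (Fin n))
    (hx : x ∈ Submodule.span ℂ (hB.eigenvectorBasis '' P)) :
    (inner (𝕜 := ℂ) x (Matrix.toEuclideanLin B x)).re ≤ c * ‖x‖ ^ 2 := by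
  rw [re_inner_toEuclideanLin hB x, norm_sq_eq_sum_normSq hB x, Finset.mul_sum]
  refine Finset.sum_le_sum fun i _ => ?_
  by_cases hi : i ∈ P
  · exact mul_le_mul_of_nonneg_right (hP i hi) (Complex.normSq_nonneg _)
  · rw [repr_eq_zero_of_mem_span hB P x hx i hi]
    simp

open scoped ComplexOrder in
lemma re_inner_le_of_psd {n : ℕ} {M N : Matrix (Fin n) (Fin n) ℂ} (h : (N - M).PosSemidef)
    (x : EuclideanSpace ℂ (Fin n)) :
    (inner (𝕜 := ℂ) x (Matrix.toEuclideanLin M x)).re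
      ≤ (inner (𝕜 := ℂ) x (Matrix.toEuclideanLin N x)).re := by
  have h2 := h.dotProduct_mulVec_nonneg ((WithLp.equiv 2 (Fin n → ℂ)) x)
  have h3 : 0 ≤ (dotProduct (star ((WithLp.equiv 2 (Fin n → ℂ)) x))
      ((N - M) *ᵥ ((WithLp.equiv 2 (Fin n → ℂ)) x))).re := (Complex.le_def.mp h2).1
  rw [Matrix.sub_mulVec, dotProduct_sub, Complex.sub_re] at h3
  rw [EuclideanSpace.inner_eq_star_dotProduct, EuclideanSpace.inner_eq_star_dotProduct,
    dotProduct_comm, dotProduct_comm (WithLp.ofLp (Matrix.toEuclideanLin N x))]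
  simp only [ofLp_toEuclideanLin_apply, WithLp.equiv_apply] at *
  linarith

open scoped ComplexOrder in
/-- Loewner monotonicity of the sorted eigenvalues. -/
lemma sEig_mono_psd {n : ℕ} {M N : Matrix (Fin n) (Fin n) ℂ} (hM : M.IsHermitian)
    (hN : N.IsHermitian) (h : (N - M).PosSemidef) (j : Fin n) : sEig hM j ≤ sEig hN j := by
  classical
  set σ := Tuple.sort hM.eigenvalues with hσ
  set τ := Tuple.sort hN.eigenvalues with hτ
  set P : Set (Fin n) := σ '' Set.Ici j with hP
  set Q : Set (Fin n) := τ '' Set.Iic j with hQ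
  set S := Submodule.span ℂ (hM.eigenvectorBasis '' P) with hS
  set T := Submodule.span ℂ (hN.eigenvectorBasis '' Q) with hT
  have horthoS : Orthonormal ℂ (fun i : Set.Ici j => hM.eigenvectorBasis (σ i)) :=
    hM.eigenvectorBasis.orthonormal.comp _ (σ.injective.comp Subtype.coe_injective)
  have horthoT : Orthonormal ℂ (fun i : Set.Iic j => hN.eigenvectorBasis (τ i)) :=
    hN.eigenvectorBasis.orthonormal.comp _ (τ.injective.comp Subtype.coe_injective)
  have himgS : hM.eigenvectorBasis '' P
      = Set.range (fun i : Set.Ici j => hM.eigenvectorBasis (σ i)) := by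
    rw [hP, ← Set.image_comp, Set.image_eq_range]
    rfl
  have himgT : hN.eigenvectorBasis '' Q
      = Set.range (fun i : Set.Iic j => hN.eigenvectorBasis (τ i)) := by
    rw [hQ, ← Set.image_comp, Set.image_eq_range]
    rfl
  have hrankS : Module.finrank ℂ S = n - (j : ℕ) := by
    rw [hS, himgS, finrank_span_eq_card horthoS.linearIndependent, ← Set.toFinset_card, Set.toFinset_Ici, Fin.card_Ici]
  have hrankT : Module.finrank ℂ T = (j : ℕ) + 1 := by
    rw [hT, himgT, finrank_span_eq_card horthoT.linearIndependent, ← Set.toFinset_card, Set.toFinset_Iic, Fin.card_Iic]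
  have hsup := Submodule.finrank_sup_add_finrank_inf_eq S T
  have hle : Module.finrank ℂ ↥(S ⊔ T) ≤ n :=
    (Submodule.finrank_le _).trans (le_of_eq (finrank_euclideanSpace_fin))
  have hins : 1 ≤ Module.finrank ℂ ↥(S ⊓ T) := by
    have hj := j.isLt
    omega
  have hne : S ⊓ T ≠ ⊥ := by
    intro hbot
    rw [hbot, finrank_bot] at hins
    omega
  obtain ⟨x, hx, hx0⟩ := Submodule.exists_mem_ne_zero_of_ne_bot hne
  have hxS : x ∈ S := (Submodule.mem_inf.mp hx).1
  have hxT : x ∈ T := (Submodule.mem_inf.mp hx).2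
  have hlow : sEig hM j * ‖x‖ ^ 2 ≤ (inner (𝕜 := ℂ) x (Matrix.toEuclideanLin M x)).re := by
    refine inner_span_ge hM _ P ?_ x hxS
    rintro i ⟨i', hi', rfl⟩
    exact sEig_mono hM hi'
  have hhigh : (inner (𝕜 := ℂ) x (Matrix.toEuclideanLin N x)).re ≤ sEig hN j * ‖x‖ ^ 2 := by
    refine inner_span_le hN _ Q ?_ x hxT
    rintro i ⟨i', hi', rfl⟩
    exact sEig_mono hN hi'
  have hmid := re_inner_le_of_psd h x
  have hnorm : 0 < ‖x‖ ^ 2 := by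
    have := norm_pos_iff.mpr hx0
    positivity
  exact le_of_mul_le_mul_right (by linarith) hnorm

/-! ### Shifted/scaled spectra -/

lemma isHermitian_real_smul {n : ℕ} (r : ℝ) {B : Matrix (Fin n) (Fin n) ℂ}
    (hB : B.IsHermitian) : ((r : ℂ) • B).IsHermitian := by
  unfold Matrix.IsHermitian at *
  rw [Matrix.conjTranspose_smul, hB, Complex.star_def, Complex.conj_ofReal]

lemma isHermitian_addT {n : ℕ} (A : Matrix (Fin n) (Fin n) ℂ) : (A + Aᴴ).IsHermitian := by
  unfold Matrix.IsHermitian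
  rw [Matrix.conjTranspose_add, Matrix.conjTranspose_conjTranspose, add_comm]

lemma isHermitian_ReM {n : ℕ} (A : Matrix (Fin n) (Fin n) ℂ) : (ReM A).IsHermitian := by
  have h : ReM A = ((2⁻¹ : ℝ) : ℂ) • (A + Aᴴ) := by rw [ReM]; norm_num
  rw [h]
  exact isHermitian_real_smul _ (isHermitian_addT A)

lemma isHermitian_ImM {n : ℕ} (A : Matrix (Fin n) (Fin n) ℂ) : (ImM A).IsHermitian := by
  unfold Matrix.IsHermitian ImM
  rw [Matrix.conjTranspose_smul, Matrix.conjTranspose_sub, Matrix.conjTranspose_conjTranspose]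
  rw [show star ((2 * Complex.I)⁻¹ : ℂ) = -((2 * Complex.I)⁻¹ : ℂ) by
    rw [star_inv₀, star_mul', Complex.star_def, Complex.conj_I, mul_neg, inv_neg,
      show (starRingEnd ℂ) 2 = 2 from map_ofNat _ 2]]
  rw [neg_smul, ← smul_neg, neg_sub]

lemma eigs_shift_smul {n : ℕ} {B N : Matrix (Fin n) (Fin n) ℂ} (hB : B.IsHermitian) (t r : ℝ)
    (hNB : N = (t : ℂ) • 1 + (r : ℂ) • B) (hN : N.IsHermitian) :
    Finset.univ.val.map hN.eigenvalues
      = Finset.univ.val.map (fun i => t + r * hB.eigenvalues i) := by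
  apply eig_multiset_eq
  have hd : (Matrix.diagonal ((↑) ∘ fun i => t + r * hB.eigenvalues i) : Matrix (Fin n) (Fin n) ℂ)
      = (t : ℂ) • 1 + (r : ℂ) • Matrix.diagonal ((↑) ∘ hB.eigenvalues) := by
    ext i j
    rcases eq_or_ne i j with rfl | hij
    · simp only [Function.comp_apply, Matrix.diagonal_apply_eq, Matrix.add_apply,
        Matrix.smul_apply, Matrix.one_apply_eq, smul_eq_mul, mul_one]
      push_cast
      ring
    · simp [Matrix.diagonal_apply_ne _ hij, Matrix.one_apply_ne hij]
  have hdecomp : N = (hB.eigenvectorUnitary : Matrix (Fin n) (Fin n) ℂ)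
      * Matrix.diagonal ((↑) ∘ fun i => t + r * hB.eigenvalues i)
      * (star (hB.eigenvectorUnitary : Matrix (Fin n) (Fin n) ℂ)) := by
    have hsp : B = (hB.eigenvectorUnitary : Matrix (Fin n) (Fin n) ℂ)
        * Matrix.diagonal ((↑) ∘ hB.eigenvalues)
        * (star (hB.eigenvectorUnitary : Matrix (Fin n) (Fin n) ℂ)) := hB.spectral_theorem
    have hmu : (hB.eigenvectorUnitary : Matrix (Fin n) (Fin n) ℂ)
        * (star (hB.eigenvectorUnitary : Matrix (Fin n) (Fin n) ℂ)) = 1 :=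
      Matrix.mem_unitaryGroup_iff.mp hB.eigenvectorUnitary.2
    calc N = (t : ℂ) • 1 + (r : ℂ) • B := hNB
    _ = (t : ℂ) • ((hB.eigenvectorUnitary : Matrix (Fin n) (Fin n) ℂ)
          * (star (hB.eigenvectorUnitary : Matrix (Fin n) (Fin n) ℂ)))
        + (r : ℂ) • ((hB.eigenvectorUnitary : Matrix (Fin n) (Fin n) ℂ)
          * Matrix.diagonal ((↑) ∘ hB.eigenvalues)
          * (star (hB.eigenvectorUnitary : Matrix (Fin n) (Fin n) ℂ))) := by
        rw [hmu, ← hsp]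
    _ = _ := by
        rw [hd]
        simp only [Matrix.mul_add, Matrix.add_mul, Matrix.mul_smul, Matrix.smul_mul,
          Matrix.mul_one]
  rw [hdecomp, charpoly_unitary_conj]
  exact charpoly_diagonal_real _

lemma sEig_shift_smul {n : ℕ} {B N : Matrix (Fin n) (Fin n) ℂ} (hB : B.IsHermitian) (t r : ℝ)
    (hr : 0 ≤ r) (hNB : N = (t : ℂ) • 1 + (r : ℂ) • B) (hN : N.IsHermitian) (j : Fin n) :
    sEig hN j = t + r * sEig hB j := by
  have hfun : sEig hN = fun j => t + r * sEig hB j := by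
    apply mono_unique (sEig_mono hN)
    · intro i i' hii'
      have := sEig_mono hB hii'
      dsimp only
      nlinarith
    · rw [sEig_multiset hN, eigs_shift_smul hB t r hNB hN,
        show (fun i => t + r * hB.eigenvalues i) = (fun μ => t + r * μ) ∘ hB.eigenvalues from rfl,
        ← Multiset.map_map, ← sEig_multiset hB, Multiset.map_map]
      rfl
  exact congrFun hfun j

lemma sEig_neg {n : ℕ} {B N : Matrix (Fin n) (Fin n) ℂ} (hB : B.IsHermitian)
    (hNB : N = -B) (hN : N.IsHermitian) (j : Fin n) :
    sEig hN j = - sEig hB j.rev := by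
  have hNB' : N = ((0 : ℝ) : ℂ) • 1 + ((-1 : ℝ) : ℂ) • B := by
    rw [hNB]; push_cast; simp
  have hfun : sEig hN = fun j => - sEig hB j.rev := by
    apply mono_unique (sEig_mono hN)
    · intro i i' hii'
      simp only [neg_le_neg_iff]
      exact sEig_mono hB (Fin.rev_le_rev.mpr hii')
    · rw [sEig_multiset hN, eigs_shift_smul hB 0 (-1) hNB' hN,
        show (fun i => (0:ℝ) + -1 * hB.eigenvalues i) = (fun μ => -μ) ∘ hB.eigenvalues from
          funext fun i => by simp only [Function.comp_apply]; ring,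
        ← Multiset.map_map, ← sEig_multiset hB,
        show (fun j : Fin n => - sEig hB j.rev) = ((fun μ => -μ) ∘ sEig hB) ∘ Fin.revPerm from rfl,
        multiset_map_perm, Multiset.map_map]
  exact congrFun hfun j

open scoped ComplexOrder in
lemma posSemidef_shift_smul {n : ℕ} {B X : Matrix (Fin n) (Fin n) ℂ} (hB : B.IsHermitian)
    (c r : ℝ) (hXB : X = (c : ℂ) • 1 + (r : ℂ) • B) (hX : X.IsHermitian)
    (h : ∀ i, 0 ≤ c + r * hB.eigenvalues i) : X.PosSemidef := by
  apply hX.posSemidef_iff_eigenvalues_nonneg.mpr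
  intro i
  have hmem : hX.eigenvalues i ∈ Finset.univ.val.map hX.eigenvalues :=
    Multiset.mem_map_of_mem _ (Finset.mem_univ i)
  rw [eigs_shift_smul hB c r hXB hX] at hmem
  obtain ⟨i₀, _, hi₀⟩ := Multiset.mem_map.mp hmem
  rw [← hi₀]
  exact h i₀

lemma kthEig_eq {n : ℕ} {B : Matrix (Fin n) (Fin n) ℂ} (hB : B.IsHermitian) (k : ℕ)
    (h : n - k < n) : kthEig B k = sEig hB ⟨n - k, h⟩ := by
  rw [kthEig, dif_pos hB, dif_pos h]
  rfl

lemma posEigs_eq {n : ℕ} {N : Matrix (Fin n) (Fin n) ℂ} (hN : N.IsHermitian) :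
    posEigs N = (Finset.univ.filter fun i => 0 < hN.eigenvalues i).card := by
  rw [posEigs, dif_pos hN]

lemma negEigs_eq {n : ℕ} {N : Matrix (Fin n) (Fin n) ℂ} (hN : N.IsHermitian) :
    negEigs N = (Finset.univ.filter fun i => hN.eigenvalues i < 0).card := by
  rw [negEigs, dif_pos hN]

set_option maxHeartbeats 1000000 in
open scoped ComplexOrder in
/-- **membership test.** The six conditions (a)–(f) are equivalent. -/
theorem stmt5 {n k : ℕ} (hk1 : 1 ≤ k) (hkn : k ≤ n)
    (A : Matrix (Fin n) (Fin n) ℂ) (a b : ℝ) :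
    List.TFAE
      [ (a + b * Complex.I) ∈ NumRange A k,
        ∀ t x y : ℝ, t + a * x + b * y = 0 → posEigs (pencil A ![t, x, y]) ≤ n - k,
        ∀ t x y : ℝ, t + a * x + b * y = 0 → negEigs (pencil A ![t, x, y]) ≤ n - k,
        ∀ x y : ℝ, lamXY A (n - k + 1) x y ≤ a * x + b * y,
        ∀ x y : ℝ, a * x + b * y ≤ lamXY A k x y,
        ∀ y : ℝ, a + b * y ≤ lamXY A k 1 y ∧ lamXY A (n - k + 1) 1 y ≤ a + b * y ] := by
  classical
  have hn : 0 < n := lt_of_lt_of_le hk1 hkn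
  have hRe := isHermitian_ReM A
  have hIm := isHermitian_ImM A
  have hM : ∀ x y : ℝ, ((x : ℂ) • ReM A + (y : ℂ) • ImM A).IsHermitian := by
    intro x y
    have h1 := isHermitian_real_smul x hRe
    have h2 := isHermitian_real_smul y hIm
    unfold Matrix.IsHermitian at *
    rw [Matrix.conjTranspose_add, h1, h2]
  have hkn' : n - k < n := by omega
  have hk1' : k - 1 < n := by omega
  have hnk1 : n - (n - k + 1) < n := by omega
  have hlamk : ∀ x y : ℝ, lamXY A k x y = sEig (hM x y) ⟨n - k, hkn'⟩ := fun x y =>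
    kthEig_eq (hM x y) k hkn'
  have hlamk' : ∀ x y : ℝ, lamXY A (n - k + 1) x y = sEig (hM x y) ⟨k - 1, hk1'⟩ := by
    intro x y
    rw [show lamXY A (n - k + 1) x y
        = kthEig ((x : ℂ) • ReM A + (y : ℂ) • ImM A) (n - k + 1) from rfl,
      kthEig_eq (hM x y) (n - k + 1) hnk1]
    rw [show (⟨n - (n - k + 1), hnk1⟩ : Fin n) = ⟨k - 1, hk1'⟩ from
      Fin.ext (show n - (n - k + 1) = k - 1 by omega)]
  have hMneg : ∀ x y : ℝ, ((↑(-x) : ℂ)) • ReM A + ((↑(-y) : ℂ)) • ImM A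
      = -((x : ℂ) • ReM A + (y : ℂ) • ImM A) := by
    intro x y
    push_cast
    rw [neg_smul, neg_smul, neg_add]
  have hneg : ∀ x y : ℝ, lamXY A (n - k + 1) x y = - lamXY A k (-x) (-y) := by
    intro x y
    rw [hlamk', hlamk, sEig_neg (hM x y) (hMneg x y) (hM (-x) (-y)) ⟨n - k, hkn'⟩, neg_neg]
    rw [show (⟨n - k, hkn'⟩ : Fin n).rev = ⟨k - 1, hk1'⟩ from
      Fin.ext (show n - (n - k + 1) = k - 1 by omega)]
  have hscale : ∀ (m : ℕ), n - m < n → ∀ (c s r : ℝ), 0 ≤ r →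
      lamXY A m (r * c) (r * s) = r * lamXY A m c s := by
    intro m hm c s r hr
    have hMeq : ((↑(r * c) : ℂ)) • ReM A + ((↑(r * s) : ℂ)) • ImM A
        = ((0 : ℝ) : ℂ) • 1 + ((r : ℝ) : ℂ) • ((c : ℂ) • ReM A + (s : ℂ) • ImM A) := by
      push_cast
      rw [smul_add, smul_smul, smul_smul, zero_smul, zero_add]
    rw [show lamXY A m (r * c) (r * s)
        = kthEig ((↑(r * c) : ℂ) • ReM A + (↑(r * s) : ℂ) • ImM A) m from rfl,
      kthEig_eq (hM (r * c) (r * s)) m hm,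
      show lamXY A m c s = kthEig ((c : ℂ) • ReM A + (s : ℂ) • ImM A) m from rfl,
      kthEig_eq (hM c s) m hm,
      sEig_shift_smul (hM c s) 0 r hr hMeq (hM (r * c) (r * s))]
    ring
  have hpencil : ∀ t x y : ℝ, pencil A ![t, x, y]
      = (t : ℂ) • 1 + ((1 : ℝ) : ℂ) • ((x : ℂ) • ReM A + (y : ℂ) • ImM A) := by
    intro t x y
    rw [pencil]
    push_cast
    rw [one_smul, add_assoc]
  have hpherm : ∀ t x y : ℝ, (pencil A ![t, x, y]).IsHermitian := by
    intro t x y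
    rw [hpencil t x y]
    have h1 : ((t : ℂ) • (1 : Matrix (Fin n) (Fin n) ℂ)).IsHermitian :=
      isHermitian_real_smul t Matrix.isHermitian_one
    have h2 := isHermitian_real_smul (1 : ℝ) (hM x y)
    unfold Matrix.IsHermitian at *
    rw [Matrix.conjTranspose_add, h1, h2]
  have key24 : ∀ x y t : ℝ, t + a * x + b * y = 0 →
      (posEigs (pencil A ![t, x, y]) ≤ n - k ↔ lamXY A (n - k + 1) x y ≤ a * x + b * y) := by
    intro x y t ht
    have hNH := hpherm t x y
    have hms := eigs_shift_smul (hM x y) t 1 (hpencil t x y) hNH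
    have e1 : posEigs (pencil A ![t, x, y])
        = (Finset.univ.filter fun i => 0 < hNH.eigenvalues i).card := posEigs_eq hNH
    have e2 : (Finset.univ.filter fun i => 0 < hNH.eigenvalues i).card
        = (Finset.univ.filter fun i => 0 < t + 1 * (hM x y).eigenvalues i).card :=
      card_filter_eq_of_multiset_eq hms (fun μ => 0 < μ)
    have e3 : (Finset.univ.filter fun i => 0 < t + 1 * (hM x y).eigenvalues i).card
        = (Finset.univ.filter fun i => 0 < t + 1 * sEig (hM x y) i).card :=
      card_filter_eq_of_multiset_eq (sEig_multiset (hM x y)).symm (fun μ => 0 < t + 1 * μ)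
    have e4 : (Finset.univ.filter fun i => 0 < t + 1 * sEig (hM x y) i)
        = (Finset.univ.filter fun i => a * x + b * y < sEig (hM x y) i) :=
      Finset.filter_congr (fun i _ => by constructor <;> intro h <;> linarith)
    have e5 := count_gt_le_iff (sEig_mono (hM x y)) (a * x + b * y) ⟨k - 1, hk1'⟩
    rw [e1, e2, e3, e4, hlamk' x y, show n - k = n - ((k - 1) + 1) by omega]
    exact e5
  have key35 : ∀ x y t : ℝ, t + a * x + b * y = 0 →
      (negEigs (pencil A ![t, x, y]) ≤ n - k ↔ a * x + b * y ≤ lamXY A k x y) := by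
    intro x y t ht
    have hNH := hpherm t x y
    have hms := eigs_shift_smul (hM x y) t 1 (hpencil t x y) hNH
    have e1 : negEigs (pencil A ![t, x, y])
        = (Finset.univ.filter fun i => hNH.eigenvalues i < 0).card := negEigs_eq hNH
    have e2 : (Finset.univ.filter fun i => hNH.eigenvalues i < 0).card
        = (Finset.univ.filter fun i => t + 1 * (hM x y).eigenvalues i < 0).card :=
      card_filter_eq_of_multiset_eq hms (fun μ => μ < 0)
    have e3 : (Finset.univ.filter fun i => t + 1 * (hM x y).eigenvalues i < 0).card
        = (Finset.univ.filter fun i => t + 1 * sEig (hM x y) i < 0).card :=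
      card_filter_eq_of_multiset_eq (sEig_multiset (hM x y)).symm (fun μ => t + 1 * μ < 0)
    have e4 : (Finset.univ.filter fun i => t + 1 * sEig (hM x y) i < 0)
        = (Finset.univ.filter fun i => sEig (hM x y) i < a * x + b * y) :=
      Finset.filter_congr (fun i _ => by constructor <;> intro h <;> linarith)
    have e5 := count_lt_le_iff (sEig_mono (hM x y)) (a * x + b * y) ⟨n - k, hkn'⟩
    rw [e1, e2, e3, e4, hlamk x y]
    exact e5
  tfae_have 2 ↔ 4 := by
    constructor
    · intro h2 x y
      exact (key24 x y (-(a * x + b * y)) (by ring)).mp (h2 _ x y (by ring))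
    · intro h4 t x y ht
      exact (key24 x y t ht).mpr (h4 x y)
  tfae_have 3 ↔ 5 := by
    constructor
    · intro h3 x y
      exact (key35 x y (-(a * x + b * y)) (by ring)).mp (h3 _ x y (by ring))
    · intro h5 t x y ht
      exact (key35 x y t ht).mpr (h5 x y)
  tfae_have 4 ↔ 5 := by
    constructor
    · intro h4 x y
      have h := h4 (-x) (-y)
      rw [hneg (-x) (-y)] at h
      simp only [neg_neg] at h
      linarith only [h]
    · intro h5 x y
      rw [hneg x y]
      have h := h5 (-x) (-y)
      linarith only [h]
  tfae_have 5 → 1 := by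
    intro h5 θ
    have h := h5 (Real.cos θ) (Real.sin θ)
    simpa [lamTheta] using h
  tfae_have 1 → 5 := by
    intro h1 x y
    by_cases h0 : x = 0 ∧ y = 0
    · obtain ⟨rfl, rfl⟩ := h0
      have hzero : ((↑(0:ℝ) : ℂ)) • ReM A + ((↑(0:ℝ) : ℂ)) • ImM A
          = ((0 : ℝ) : ℂ) • 1
            + ((0 : ℝ) : ℂ) • (((0:ℝ) : ℂ) • ReM A + ((0:ℝ) : ℂ) • ImM A) := by
        push_cast
        simp
      have hz := sEig_shift_smul (hM 0 0) 0 0 le_rfl hzero (hM 0 0) ⟨n - k, hkn'⟩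
      rw [hlamk 0 0, hz]
      norm_num
    · have hxy2 : 0 < x ^ 2 + y ^ 2 := by
        rcases not_and_or.mp h0 with h | h
        · rcases lt_or_gt_of_ne h with h' | h' <;> nlinarith [sq_nonneg y]
        · rcases lt_or_gt_of_ne h with h' | h' <;> nlinarith [sq_nonneg x]
      set r := Real.sqrt (x ^ 2 + y ^ 2) with hrdef
      have hr : 0 < r := Real.sqrt_pos.mpr hxy2
      set z : ℂ := (x : ℂ) + (y : ℂ) * Complex.I with hzdef
      have hzre : z.re = x := by simp [hzdef]
      have hzim : z.im = y := by simp [hzdef]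
      have hz0 : z ≠ 0 := by
        intro hcontra
        rw [Complex.ext_iff] at hcontra
        simp only [Complex.zero_re, Complex.zero_im] at hcontra
        exact h0 ⟨by rw [← hzre, hcontra.1], by rw [← hzim, hcontra.2]⟩
      have habs : ‖z‖ = r := by
        rw [Complex.norm_def, Complex.normSq_apply, hzre, hzim, hrdef]
        congr 1
        ring
      have hcos := Complex.cos_arg hz0
      have hsin := Complex.sin_arg z
      rw [hzre, habs] at hcos
      rw [hzim, habs] at hsin
      have hxeq : x = r * Real.cos (Complex.arg z) := by
        rw [hcos]
        field_simp
      have hyeq : y = r * Real.sin (Complex.arg z) := by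
        rw [hsin]
        field_simp
      have h : a * Real.cos (Complex.arg z) + b * Real.sin (Complex.arg z)
          ≤ lamXY A k (Real.cos (Complex.arg z)) (Real.sin (Complex.arg z)) := by
        simpa [lamTheta] using h1 (Complex.arg z)
      have hsc := hscale k hkn' (Real.cos (Complex.arg z)) (Real.sin (Complex.arg z)) r hr.le
      calc a * x + b * y
          = r * (a * Real.cos (Complex.arg z) + b * Real.sin (Complex.arg z)) := by
            rw [hxeq, hyeq]; ring
      _ ≤ r * lamXY A k (Real.cos (Complex.arg z)) (Real.sin (Complex.arg z)) :=
            mul_le_mul_of_nonneg_left h hr.le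
      _ = lamXY A k x y := by rw [← hsc, ← hxeq, ← hyeq]
  tfae_have 5 → 6 := by
    intro h5 y
    refine ⟨by linarith only [h5 1 y], ?_⟩
    have h4 := tfae_4_iff_5.mpr h5
    linarith only [h4 1 y]
  tfae_have 6 → 5 := by
    intro h6 x y
    rcases lt_trichotomy x 0 with hx | rfl | hx
    · have hx0 : x ≠ 0 := ne_of_lt hx
      have hnx : (0 : ℝ) < -x := by linarith
      have hs := hscale (n - k + 1) hnk1 1 (y / x) (-x) hnx.le
      have hxdiv : (-x) * (y / x) = -y := by
        field_simp
      rw [mul_one, hxdiv] at hs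
      have h2 := (h6 (y / x)).2
      have hneg2 : lamXY A k x y = - lamXY A (n - k + 1) (-x) (-y) := by
        have h := hneg (-x) (-y)
        simp only [neg_neg] at h
        linarith only [h]
      rw [hneg2, hs]
      have hxm := mul_le_mul_of_nonneg_left h2 hnx.le
      have hid : (-x) * (a + b * (y / x)) = -(a * x) - b * y := by
        field_simp
        try ring
      linarith only [hxm, hid]
    · obtain ⟨c, hc⟩ : ∃ c : ℝ, ∀ i, hRe.eigenvalues i ≤ c :=
        ⟨∑ i, |hRe.eigenvalues i|, fun i => le_trans (le_abs_self _)
          (Finset.single_le_sum (f := fun j => |hRe.eigenvalues j|) (fun j _ => abs_nonneg _) (Finset.mem_univ i))⟩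
      have hkey : ∀ ε : ℝ, 0 < ε → b * y ≤ lamXY A k 0 y + ε * (c - a) := by
        intro ε hε
        have hεne : ε ≠ 0 := ne_of_gt hε
        have hs := hscale k hkn' 1 (y / ε) ε hε.le
        rw [mul_one, show ε * (y / ε) = y from by field_simp] at hs
        have h61 := (h6 (y / ε)).1
        set X : Matrix (Fin n) (Fin n) ℂ :=
          ((↑(ε * c) : ℂ)) • 1 + (((0 : ℝ) : ℂ) • ReM A + ((y : ℝ) : ℂ) • ImM A) with hX
        have hXherm : X.IsHermitian := by
          have h1 : ((↑(ε * c) : ℂ) • (1 : Matrix (Fin n) (Fin n) ℂ)).IsHermitian :=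
            isHermitian_real_smul _ Matrix.isHermitian_one
          have h2 := hM 0 y
          unfold Matrix.IsHermitian at *
          rw [hX, Matrix.conjTranspose_add, h1, h2]
        have hdher : (X - (((ε : ℝ) : ℂ) • ReM A + ((y : ℝ) : ℂ) • ImM A)).IsHermitian := by
          have h1 := hXherm
          have h2 := hM ε y
          unfold Matrix.IsHermitian at *
          rw [Matrix.conjTranspose_sub, h1, h2]
        have hdiff : X - (((ε : ℝ) : ℂ) • ReM A + ((y : ℝ) : ℂ) • ImM A)
            = ((↑(ε * c) : ℂ)) • 1 + ((↑(-ε) : ℂ)) • ReM A := by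
          rw [hX]
          push_cast
          module
        have hpsd : (X - (((ε : ℝ) : ℂ) • ReM A + ((y : ℝ) : ℂ) • ImM A)).PosSemidef :=
          posSemidef_shift_smul hRe (ε * c) (-ε) hdiff hdher
            (fun i => by nlinarith [hc i])
        have hXdecomp : X = ((↑(ε * c) : ℂ)) • 1
            + ((1 : ℝ) : ℂ) • (((0 : ℝ) : ℂ) • ReM A + ((y : ℝ) : ℂ) • ImM A) := by
          rw [hX]
          push_cast
          module
        have hXs := sEig_shift_smul (hM 0 y) (ε * c) 1 zero_le_one hXdecomp hXherm
          ⟨n - k, hkn'⟩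
        have hW : lamXY A k ε y ≤ ε * c + lamXY A k 0 y := by
          rw [hlamk ε y, hlamk 0 y]
          have hmono := sEig_mono_psd (hM ε y) hXherm hpsd ⟨n - k, hkn'⟩
          rw [hXs] at hmono
          linarith only [hmono]
        have hmul := mul_le_mul_of_nonneg_left h61 hε.le
        have hexp : ε * (a + b * (y / ε)) = ε * a + b * y := by
          field_simp
          try ring
        linarith only [hmul, hW, hs.le, hs.symm.le, hexp]
      have hfin : b * y ≤ lamXY A k 0 y := by
        by_contra hlt
        push_neg at hlt
        rcases le_or_gt (c - a) 0 with hca | hca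
        · have h1e := hkey 1 one_pos
          linarith only [h1e, hlt, hca]
        · have hkey2 := hkey ((b * y - lamXY A k 0 y) / (2 * (c - a))) (div_pos (by linarith) (by linarith))
          have hh : ((b * y - lamXY A k 0 y) / (2 * (c - a))) * (c - a)
              = (b * y - lamXY A k 0 y) / 2 := by
            field_simp
            try ring
          linarith only [hkey2, hh, hlt]
      simpa using hfin
    · have hs := hscale k hkn' 1 (y / x) x hx.le
      rw [mul_one, show x * (y / x) = y from by field_simp] at hs
      have h61 := (h6 (y / x)).1
      have hmul := mul_le_mul_of_nonneg_left h61 hx.le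
      have hxy : x * (a + b * (y / x)) = a * x + b * y := by
        field_simp
        try ring
      linarith only [hmul, hxy, hs]
  tfae_finish

end
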